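/- Let {M_β : β ≤ α} be an increasing continuous transfinite chain of metric spaces (M_β ⊆ M_γ isometrically for β ≤ γ, with unions at limit stages). If M_β is g-embedded in M_{β+1} for every β < α, then M₀ is g-embedded in M_α. -/

import Mathlib

instance isoTopology (X : Type*) [MetricSpace X] : TopologicalSpace (X ≃ᵢ X) :=
  TopologicalSpace.induced (fun g (x : X) => g x) Pi.topologicalSpace


/-- `s` is g-embedded in `t`: `s ⊆ t` and there is a continuous homomorphism
`Iso(s) → Iso(t)` such that the image of each isometry `φ` of `s` extends `φ`. -/
def GEmbedded {L : Type*} [MetricSpace L] (s t : Set L) : Prop :=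
  ∃ h : s ⊆ t, ∃ e : (↥s ≃ᵢ ↥s) →* (↥t ≃ᵢ ↥t),
    Continuous e ∧ ∀ (φ : ↥s ≃ᵢ ↥s) (x : ↥s),
      ((e φ) (Set.inclusion h x) : L) = ((φ x : ↥s) : L)

open Classical
section aux
variable {L : Type*} [MetricSpace L]

noncomputable def toIsoOf (s : Set L) (g : L → L) : ↥s ≃ᵢ ↥s :=
  if h : ∃ ψ : ↥s ≃ᵢ ↥s, ∀ x : s, (ψ x : L) = g x then h.choose else IsometryEquiv.refl _

theorem toIsoOf_spec (s : Set L) (g : L → L)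
    (h : ∃ ψ : ↥s ≃ᵢ ↥s, ∀ x : s, (ψ x : L) = g x) (x : s) :
    ((toIsoOf s g) x : L) = g x := by
  rw [toIsoOf, dif_pos h]; exact h.choose_spec x

noncomputable def Fch (M : Ordinal → Set L)
    (f : ∀ β : Ordinal, (↥(M β) ≃ᵢ ↥(M β)) →* (↥(M (β + 1)) ≃ᵢ ↥(M (β + 1))))
    (β : Ordinal) : (↥(M 0) ≃ᵢ ↥(M 0)) → L → L :=
  Ordinal.limitRecOn β
    (fun φ x => if h : x ∈ M 0 then (φ ⟨x, h⟩ : L) else x)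
    (fun γ IH φ x =>
      if h : x ∈ M (γ + 1) then ((f γ (toIsoOf (M γ) (IH φ))) ⟨x, h⟩ : L) else x)
    (fun β _ IH φ x =>
      if h : ∃ γ, ∃ hγ : γ < β, x ∈ M γ then IH h.choose h.choose_spec.choose φ x else x)

theorem Fch_zero (M : Ordinal → Set L) (f) :
    Fch M f 0 = fun φ x => if h : x ∈ M 0 then (φ ⟨x, h⟩ : L) else x := by
  rw [Fch, Ordinal.limitRecOn_zero]

theorem Fch_succ (M : Ordinal → Set L) (f) (γ : Ordinal) :
    Fch M f (γ + 1) = fun φ x =>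
      if h : x ∈ M (γ + 1) then ((f γ (toIsoOf (M γ) (Fch M f γ φ))) ⟨x, h⟩ : L) else x := by
  conv_lhs => rw [Fch, Ordinal.add_one_eq_succ, Ordinal.limitRecOn_succ]
  rfl

theorem Fch_limit (M : Ordinal → Set L) (f) {β : Ordinal} (hβ : Order.IsSuccLimit β) :
    Fch M f β = fun φ x =>
      if h : ∃ γ, ∃ hγ : γ < β, x ∈ M γ then Fch M f h.choose φ x else x := by
  conv_lhs => rw [Fch, Ordinal.limitRecOn_limit _ _ _ _ hβ]
  rfl

end aux

theorem stmt_10 {L : Type*} [MetricSpace L] (α : Ordinal) (M : Ordinal → Set L)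
    (hmono : ∀ β γ : Ordinal, β ≤ γ → γ ≤ α → M β ⊆ M γ)
    (hcont : ∀ β ≤ α, Order.IsSuccLimit β → M β = ⋃ γ ∈ Set.Iio β, M γ)
    (hstep : ∀ β < α, GEmbedded (M β) (M (β + 1))) :
    GEmbedded (M 0) (M α) := by
  classical
  -- Extract the step homomorphisms (total family, junk outside β < α).
  have hf : ∀ β : Ordinal, ∃ f : (↥(M β) ≃ᵢ ↥(M β)) →* (↥(M (β + 1)) ≃ᵢ ↥(M (β + 1))),
      β < α → Continuous f ∧
        ∀ (ψ : ↥(M β) ≃ᵢ ↥(M β)) (x : ↥(M β)) (hx : (x : L) ∈ M (β + 1)),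
          ((f ψ) ⟨x, hx⟩ : L) = ((ψ x : ↥(M β)) : L) := by
    intro β
    by_cases h : β < α
    · obtain ⟨hsub, f, hc, he⟩ := hstep β h
      exact ⟨f, fun _ => ⟨hc, fun ψ x hx => he ψ x⟩⟩
    · exact ⟨1, fun h' => absurd h' h⟩
  choose f hfspec using hf
  -- Main transfinite induction.
  have main : ∀ β : Ordinal, β ≤ α →
      (∀ γ, γ ≤ β → ∀ φ (x : L), x ∈ M γ → Fch M f β φ x = Fch M f γ φ x) ∧
      ∃ e : (↥(M 0) ≃ᵢ ↥(M 0)) →* (↥(M β) ≃ᵢ ↥(M β)), Continuous e ∧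
        ∀ φ (x : ↥(M β)), ((e φ) x : L) = Fch M f β φ (x : L) := by
    intro β
    induction β using Ordinal.limitRecOn with
    | zero =>
      intro _
      constructor
      · intro γ hγ φ x hx
        have : γ = 0 := le_antisymm hγ (zero_le (a := γ))
        subst this; rfl
      · refine ⟨MonoidHom.id _, continuous_id, fun φ x => ?_⟩
        simp only [Fch_zero]
        rw [dif_pos x.2]
        rfl
    | add_one γ IH =>
      intro hsucc
      have hγlt : γ < α := lt_of_lt_of_le
        (by rw [Ordinal.add_one_eq_succ]; exact Order.lt_succ γ) hsucc
      have hγα : γ ≤ α := hγlt.le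
      obtain ⟨coh, e, hec, hea⟩ := IH hγα
      obtain ⟨hfc, hfe⟩ := hfspec γ hγlt
      have heq : ∀ φ, toIsoOf (M γ) (Fch M f γ φ) = e φ := by
        intro φ
        refine IsometryEquiv.ext fun x => Subtype.ext ?_
        rw [toIsoOf_spec (M γ) _ ⟨e φ, hea φ⟩ x, hea]
      have anchor : ∀ φ (x : ↥(M (γ + 1))),
          (((f γ) (e φ)) x : L) = Fch M f (γ + 1) φ (x : L) := by
        intro φ x
        simp only [Fch_succ]
        rw [dif_pos x.2, heq]
      constructor
      · intro δ hδ φ x hx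
        rcases eq_or_lt_of_le hδ with rfl | hδlt
        · rfl
        · have hδγ : δ ≤ γ := by
            rwa [Ordinal.add_one_eq_succ, Order.lt_succ_iff] at hδlt
          have hxγ : x ∈ M γ := hmono δ γ hδγ hγα hx
          have hxs : x ∈ M (γ + 1) := hmono γ (γ + 1) (le_of_lt
            (by rw [Ordinal.add_one_eq_succ]; exact Order.lt_succ γ)) hsucc hxγ
          calc Fch M f (γ + 1) φ x = (((f γ) (e φ)) ⟨x, hxs⟩ : L) :=
              (anchor φ ⟨x, hxs⟩).symm
            _ = ((e φ) ⟨x, hxγ⟩ : L) := hfe (e φ) ⟨x, hxγ⟩ hxs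
            _ = Fch M f γ φ x := hea φ ⟨x, hxγ⟩
            _ = Fch M f δ φ x := coh δ hδγ φ x hx
      · refine ⟨(f γ).comp e, ?_, fun φ x => ?_⟩
        · have : ⇑((f γ).comp e) = (f γ) ∘ e := rfl
          rw [this]; exact hfc.comp hec
        · exact anchor φ x
    | limit β hlim IH =>
      intro hβα
      have hM : M β = ⋃ γ ∈ Set.Iio β, M γ := hcont β hβα hlim
      have hmem : ∀ x : L, x ∈ M β ↔ ∃ γ, ∃ _ : γ < β, x ∈ M γ := by
        intro x
        rw [hM]
        simp only [Set.mem_iUnion, Set.mem_Iio, exists_prop]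
      -- coherence at β
      have coh : ∀ γ, γ ≤ β → ∀ φ (x : L), x ∈ M γ → Fch M f β φ x = Fch M f γ φ x := by
        intro γ hγ φ x hx
        rcases eq_or_lt_of_le hγ with rfl | hγβ
        · rfl
        · have hxβ : ∃ γ', ∃ _ : γ' < β, x ∈ M γ' := ⟨γ, hγβ, hx⟩
          rw [Fch_limit M f hlim]
          simp only
          rw [dif_pos hxβ]
          set γ₀ := hxβ.choose with hγ₀def
          have hγ₀β : γ₀ < β := hxβ.choose_spec.choose
          have hxγ₀ : x ∈ M γ₀ := hxβ.choose_spec.choose_spec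
          have hδβ : max γ γ₀ < β := max_lt hγβ hγ₀β
          have hδα : max γ γ₀ ≤ α := le_trans hδβ.le hβα
          obtain ⟨cohδ, _⟩ := IH (max γ γ₀) hδβ hδα
          rw [← cohδ γ₀ (le_max_right γ γ₀) φ x hxγ₀]
          exact cohδ γ (le_max_left γ γ₀) φ x hx
      -- membership of images at stages below β
      have hFmem : ∀ γ, γ < β → ∀ φ (x : L) (hx : x ∈ M γ), Fch M f γ φ x ∈ M γ := by
        intro γ hγβ φ x hx
        obtain ⟨_, e, _, hea⟩ := IH γ hγβ (le_trans hγβ.le hβα)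
        rw [← hea φ ⟨x, hx⟩]
        exact ((e φ) ⟨x, hx⟩).2
      have main_mem : ∀ φ (x : L), x ∈ M β → Fch M f β φ x ∈ M β := by
        intro φ x hxβ
        obtain ⟨γ, hγβ, hx⟩ := (hmem x).1 hxβ
        rw [coh γ hγβ.le φ x hx]
        exact (hmem _).2 ⟨γ, hγβ, hFmem γ hγβ φ x hx⟩
      -- algebraic identities
      have hone : ∀ x : L, x ∈ M β → Fch M f β 1 x = x := by
        intro x hxβ
        obtain ⟨γ, hγβ, hx⟩ := (hmem x).1 hxβ
        obtain ⟨_, e, _, hea⟩ := IH γ hγβ (le_trans hγβ.le hβα)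
        rw [coh γ hγβ.le 1 x hx, ← hea 1 ⟨x, hx⟩, map_one]
        rfl
      have hcomp : ∀ φ ψ (x : L), x ∈ M β →
          Fch M f β φ (Fch M f β ψ x) = Fch M f β (φ * ψ) x := by
        intro φ ψ x hxβ
        obtain ⟨γ, hγβ, hx⟩ := (hmem x).1 hxβ
        obtain ⟨_, e, _, hea⟩ := IH γ hγβ (le_trans hγβ.le hβα)
        have h1 : Fch M f β ψ x = ((e ψ) ⟨x, hx⟩ : L) := by
          rw [coh γ hγβ.le ψ x hx, hea]
        have h2 : ((e ψ) ⟨x, hx⟩ : L) ∈ M γ := ((e ψ) ⟨x, hx⟩).2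
        rw [h1, coh γ hγβ.le φ _ h2, ← hea φ ((e ψ) ⟨x, hx⟩),
          coh γ hγβ.le (φ * ψ) x hx, ← hea (φ * ψ) ⟨x, hx⟩, map_mul]
        rfl
      -- distance preservation
      have hdist : ∀ φ (x y : L), x ∈ M β → y ∈ M β →
          dist (Fch M f β φ x) (Fch M f β φ y) = dist x y := by
        intro φ x y hxβ hyβ
        obtain ⟨γx, hγxβ, hx⟩ := (hmem x).1 hxβ
        obtain ⟨γy, hγyβ, hy⟩ := (hmem y).1 hyβ
        have hδβ : max γx γy < β := max_lt hγxβ hγyβ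
        have hxδ : x ∈ M (max γx γy) :=
          hmono γx _ (le_max_left _ _) (le_trans hδβ.le hβα) hx
        have hyδ : y ∈ M (max γx γy) :=
          hmono γy _ (le_max_right _ _) (le_trans hδβ.le hβα) hy
        obtain ⟨_, e, _, hea⟩ := IH (max γx γy) hδβ (le_trans hδβ.le hβα)
        rw [coh _ hδβ.le φ x hxδ, coh _ hδβ.le φ y hyδ,
          ← hea φ ⟨x, hxδ⟩, ← hea φ ⟨y, hyδ⟩]
        have := (e φ).isometry.dist_eq ⟨x, hxδ⟩ ⟨y, hyδ⟩
        rw [Subtype.dist_eq, Subtype.dist_eq] at this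
        exact this
      -- Build the isometry equivalences of M β
      let T : (↥(M 0) ≃ᵢ ↥(M 0)) → ↥(M β) → ↥(M β) :=
        fun φ x => ⟨Fch M f β φ (x : L), main_mem φ x x.2⟩
      have hTT : ∀ φ ψ (x : ↥(M β)), T φ (T ψ x) = T (φ * ψ) x := by
        intro φ ψ x
        exact Subtype.ext (hcomp φ ψ x x.2)
      have hT1 : ∀ x : ↥(M β), T 1 x = x := fun x => Subtype.ext (hone x x.2)
      let E : (↥(M 0) ≃ᵢ ↥(M 0)) → (↥(M β) ≃ᵢ ↥(M β)) := fun φ =>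
        { toFun := T φ
          invFun := T φ⁻¹
          left_inv := fun x => by rw [hTT, inv_mul_cancel, hT1]
          right_inv := fun x => by rw [hTT, mul_inv_cancel, hT1]
          isometry_toFun := Isometry.of_dist_eq fun x y => by
            rw [Subtype.dist_eq, Subtype.dist_eq]
            exact hdist φ x y x.2 y.2 }
      have hEmul : ∀ φ ψ, E (φ * ψ) = E φ * E ψ := by
        intro φ ψ
        exact IsometryEquiv.ext fun x => (hTT φ ψ x).symm
      refine ⟨coh, MonoidHom.mk' E hEmul, ?_, fun φ x => rfl⟩
      -- continuity
      apply continuous_induced_rng.2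
      apply continuous_pi
      intro x
      apply Continuous.subtype_mk
      obtain ⟨γ, hγβ, hx⟩ := (hmem x).1 x.2
      obtain ⟨_, e, hec, hea⟩ := IH γ hγβ (le_trans hγβ.le hβα)
      have hfun : (fun φ => Fch M f β φ (x : L)) =
          fun φ => ((e φ) ⟨(x : L), hx⟩ : L) :=
        funext fun φ => (coh γ hγβ.le φ x hx).trans (hea φ ⟨(x : L), hx⟩).symm
      show Continuous fun φ => Fch M f β φ (x : L)
      rw [hfun]
      exact continuous_subtype_val.comp
        (((continuous_apply (⟨(x : L), hx⟩ : ↥(M γ))).comp continuous_induced_dom).comp hec)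
  -- conclude
  obtain ⟨cohα, e, hec, hea⟩ := main α le_rfl
  refine ⟨hmono 0 α (zero_le (a := α)) le_rfl, e, hec, fun φ x => ?_⟩
  rw [hea φ (Set.inclusion _ x)]
  show Fch M f α φ (x : L) = _
  rw [cohα 0 (zero_le (a := α)) φ x x.2]
  simp only [Fch_zero]
  rw [dif_pos x.2]
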